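/- (Hosszú–Gluskin theorem.) Let n ≥ 3 and let G be an n-ary group with multiplication μₙ. Fix e ∈ G with querelement ē, let g ∗ h := μₙ[g, e^{n−3}, ē, h] be the associated binary group operation with identity e, and define φ(g) := μₙ[e, g, e^{n−3}, ē]. Then φ is an automorphism of ⟨G, ∗, e⟩, the first polyadic power e⟨1⟩ := μₙ[e, …, e] (n copies) is a fixed point of φ (φ(e⟨1⟩) = e⟨1⟩), the (n−1)-st power of φ is conjugation by e⟨1⟩ (φ^{n−1}(g) = e⟨1⟩ ∗ g ∗ (e⟨1⟩)⁻¹ for all g), and the chain formula holds: μₙ[g₁, …, gₙ] = g₁ ∗ φ(g₂) ∗ φ²(g₃) ∗ ⋯ ∗ φ^{n−1}(gₙ) ∗ e⟨1⟩ for all g₁,…,gₙ ∈ G. -/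

import Mathlib

/-- Total associativity of an `n`-ary operation `μ` given on lists: the composed
product of `2n-1` elements with one inner multiplication does not depend on the
position of the inner multiplication. -/
def TotAssoc {G : Type*} (n : ℕ) (μ : List G → G) : Prop :=
  ∀ p₁ c₁ s₁ p₂ c₂ s₂ : List G,
    c₁.length = n → c₂.length = n →
    p₁.length + s₁.length = n - 1 → p₂.length + s₂.length = n - 1 →
    p₁ ++ c₁ ++ s₁ = p₂ ++ c₂ ++ s₂ →
    μ (p₁ ++ μ c₁ :: s₁) = μ (p₂ ++ μ c₂ :: s₂)

/-- Unique solvability of an `n`-ary operation in each place `i = 0,…,n-1`. -/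
def UniqSolv {G : Type*} (n : ℕ) (μ : List G → G) : Prop :=
  ∀ (u : List G) (g : G), u.length = n - 1 →
    ∀ i ≤ n - 1, ∃! h : G, μ (u.take i ++ h :: u.drop i) = g

namespace HGaux

variable {G : Type*}

def muIter (n : ℕ) (μ : List G → G) : ℕ → List G → List G
  | 0, w => w
  | k+1, w => if w.length ≤ 1 then w else muIter n μ k (μ (w.take n) :: w.drop n)

def muStar (n : ℕ) (μ : List G → G) (d : G) (w : List G) : G :=
  (muIter n μ w.length w).headD d

lemma muIter_of_le (n : ℕ) (μ : List G → G) (k : ℕ) {w : List G} (h : w.length ≤ 1) :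
    muIter n μ k w = w := by
  cases k <;> simp [muIter, h]

lemma muIter_add (n : ℕ) (μ : List G → G) (a b : ℕ) (w : List G) :
    muIter n μ (a + b) w = muIter n μ b (muIter n μ a w) := by
  induction a generalizing w with
  | zero => simp [muIter]
  | succ a ih =>
      by_cases h : w.length ≤ 1
      · rw [muIter_of_le n μ _ h, muIter_of_le n μ _ h, muIter_of_le n μ _ h]
      · rw [show a + 1 + b = (a + b) + 1 by omega]
        simp only [muIter, if_neg h]
        exact ih _

lemma muIter_length (n : ℕ) (μ : List G → G) (h2 : 2 ≤ n) :
    ∀ (k : ℕ) (w : List G), w.length ≤ k + 1 → (muIter n μ k w).length ≤ 1 := by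
  intro k
  induction k with
  | zero => intro w hw; simpa [muIter] using hw
  | succ k ih =>
      intro w hw
      by_cases h : w.length ≤ 1
      · rw [muIter_of_le n μ _ h]; exact h
      · simp only [muIter, if_neg h]
        apply ih
        simp only [List.length_cons, List.length_drop]
        omega

lemma muStar_step (n : ℕ) (μ : List G → G) (d : G) (h2 : 2 ≤ n) {w : List G}
    (hw : 2 ≤ w.length) :
    muStar n μ d w = muStar n μ d (μ (w.take n) :: w.drop n) := by
  set w' := μ (w.take n) :: w.drop n with hw'def
  have hw' : w'.length = w.length - n + 1 := by simp [hw'def]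
  unfold muStar
  obtain ⟨l, hl⟩ : ∃ l, w.length = l + 1 := ⟨w.length - 1, by omega⟩
  rw [hl]
  have h1 : muIter n μ (l+1) w = muIter n μ l w' := by
    simp only [muIter, if_neg (show ¬ w.length ≤ 1 by omega), hw'def]
  rw [h1]
  have h2' : w'.length ≤ l := by omega
  rw [show l = w'.length + (l - w'.length) by omega, muIter_add,
    muIter_of_le n μ _ (muIter_length n μ h2 _ _ (by omega))]

lemma muStar_single (n : ℕ) (μ : List G → G) (d : G) (x : G) : muStar n μ d [x] = x := by
  simp [muStar, muIter_of_le]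

lemma muStar_of_length (n : ℕ) (μ : List G → G) (d : G) (h2 : 2 ≤ n) {w : List G}
    (hw : w.length = n) : muStar n μ d w = μ w := by
  rw [muStar_step n μ d h2 (by omega)]
  rw [List.take_of_length_le (le_of_eq hw), List.drop_of_length_le (le_of_eq hw)]
  exact muStar_single n μ d _

lemma genAssoc (n : ℕ) (μ : List G → G) (d : G) (hn : 3 ≤ n) (hassoc : TotAssoc n μ) :
    ∀ (t : ℕ) (p c s : List G), p.length + s.length = t → c.length = n → (n-1) ∣ t →
      muStar n μ d (p ++ μ c :: s) = muStar n μ d (p ++ c ++ s) := by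
  intro t
  induction t using Nat.strong_induction_on with
  | _ t ih =>
    intro p c s ht hc hdvd
    rcases Nat.eq_zero_or_pos t with h0 | hpos
    · have hp : p = [] := List.eq_nil_of_length_eq_zero (by omega)
      have hs : s = [] := List.eq_nil_of_length_eq_zero (by omega)
      subst hp hs
      simp only [List.nil_append, List.append_nil]
      rw [muStar_single, muStar_of_length n μ d (by omega) hc]
    · have ht' : n - 1 ≤ t := Nat.le_of_dvd hpos hdvd
      by_cases hp : n ≤ p.length
      · have hsplit : p = p.take n ++ p.drop n := (List.take_append_drop n p).symm
        have hlen1 : (p.take n).length = n := by rw [List.length_take]; omega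
        have e1 : muStar n μ d (p ++ μ c :: s)
            = muStar n μ d (μ (p.take n) :: (p.drop n ++ μ c :: s)) := by
          nth_rewrite 1 [hsplit]
          rw [List.append_assoc]
          rw [muStar_step n μ d (by omega) (by simp; omega)]
          rw [List.take_left' hlen1, List.drop_left' hlen1]
        have e2 : muStar n μ d (p ++ c ++ s)
            = muStar n μ d (μ (p.take n) :: (p.drop n ++ c ++ s)) := by
          nth_rewrite 1 [hsplit]
          rw [List.append_assoc, List.append_assoc]
          rw [muStar_step n μ d (by omega) (by simp; omega)]
          rw [List.take_left' hlen1, List.drop_left' hlen1, ← List.append_assoc]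
        rw [e1, e2]
        have := ih (t - (n-1)) (by omega) (μ (p.take n) :: p.drop n) c s
          (by simp [List.length_drop]; omega) hc (Nat.dvd_sub hdvd dvd_rfl)
        simpa using this
      · push_neg at hp
        set s0 := s.take (n - 1 - p.length) with hs0
        set s1 := s.drop (n - 1 - p.length) with hs1
        have hss : s = s0 ++ s1 := (List.take_append_drop _ s).symm
        have hs0l : s0.length = n - 1 - p.length := by
          rw [hs0, List.length_take]; omega
        have hs1l : s1.length = t - (n - 1) := by
          rw [hs1, List.length_drop]; omega
        set A := p ++ μ c :: s0 with hA
        have hAl : A.length = n := by simp [hA]; omega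
        have step1 : muStar n μ d (p ++ μ c :: s) = muStar n μ d (μ A :: s1) := by
          rw [hss, show p ++ μ c :: (s0 ++ s1) = A ++ s1 by simp [hA]]
          rw [muStar_step n μ d (by omega) (by simp [hAl]; omega)]
          rw [List.take_left' hAl, List.drop_left' hAl]
        set F := p ++ c ++ s0 with hF
        have hFl : F.length = 2 * n - 1 := by simp [hF]; omega
        have hBl : (F.take n).length = n := by rw [List.length_take]; omega
        have hCl : (F.drop n).length = n - 1 := by rw [List.length_drop]; omega
        have step2 : μ A = μ (μ (F.take n) :: F.drop n) := by
          have := hassoc p c s0 [] (F.take n) (F.drop n) hc hBl (by omega) (by simp; omega)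
            (by simp [hF])
          simpa [hA] using this
        have step3 : muStar n μ d (μ A :: s1)
            = muStar n μ d (μ (F.take n) :: (F.drop n ++ s1)) := by
          rw [step2]
          have := ih (t - (n-1)) (by omega) [] (μ (F.take n) :: F.drop n) s1
            (by simp; omega) (by simp [hCl]; omega) (Nat.dvd_sub hdvd dvd_rfl)
          simpa using this
        have step4 : muStar n μ d (p ++ c ++ s)
            = muStar n μ d (μ (F.take n) :: (F.drop n ++ s1)) := by
          rw [hss, show p ++ c ++ (s0 ++ s1) = F ++ s1 by simp [hF]]
          rw [muStar_step n μ d (by omega) (by simp [hFl]; omega)]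
          rw [List.take_append, List.drop_append]
          rw [show n - F.length = 0 by omega]
          simp
        rw [step1, step3, step4]

lemma genAssocStar (n : ℕ) (μ : List G → G) (d : G) (hn : 3 ≤ n) (hassoc : TotAssoc n μ) :
    ∀ (t : ℕ) (p c s : List G), c.length = t → 1 ≤ t → (n-1) ∣ (t - 1) →
      (n-1) ∣ (p.length + s.length) →
      muStar n μ d (p ++ muStar n μ d c :: s) = muStar n μ d (p ++ c ++ s) := by
  intro t
  induction t using Nat.strong_induction_on with
  | _ t ih =>
    intro p c s hct ht hdvd hps
    rcases eq_or_lt_of_le ht with h1 | h1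
    · obtain ⟨x, rfl⟩ := List.length_eq_one_iff.mp (show c.length = 1 by omega)
      rw [muStar_single]; simp
    · have htn : n ≤ t := by
        have := Nat.le_of_dvd (show 0 < t - 1 by omega) hdvd
        omega
      have hstep : muStar n μ d c = muStar n μ d (μ (c.take n) :: c.drop n) := by
        exact muStar_step n μ d (by omega) (by omega)
      rw [hstep]
      have hc'len : (μ (c.take n) :: c.drop n).length = t - (n-1) := by
        simp [List.length_drop]; omega
      have hih := ih (t - (n-1)) (by omega) p (μ (c.take n) :: c.drop n) s hc'len
        (by omega) (by
          have h := Nat.dvd_sub hdvd (dvd_refl (n-1))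
          rwa [show t - 1 - (n-1) = t - (n-1) - 1 by omega] at h) hps
      rw [hih]
      have htake : (c.take n).length = n := by rw [List.length_take]; omega
      have hgen := genAssoc n μ d hn hassoc (p.length + (c.drop n ++ s).length)
        p (c.take n) (c.drop n ++ s) rfl htake (by
          simp only [List.length_append, List.length_drop, hct]
          have h1 := Nat.dvd_sub hdvd (dvd_refl (n-1))
          have h2 := dvd_add hps h1
          rwa [show p.length + s.length + (t - 1 - (n-1)) = p.length + (t - n + s.length)
            by omega] at h2)
      rw [show (p ++ (μ (c.take n) :: c.drop n) ++ s) = p ++ μ (c.take n) :: (c.drop n ++ s)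
        by simp]
      rw [hgen]
      rw [List.append_assoc p, ← List.append_assoc (c.take n), List.take_append_drop,
        ← List.append_assoc]

lemma rep_cons (b : ℕ) (x : G) (t : List G) :
    x :: (List.replicate b x ++ t) = List.replicate (b+1) x ++ t := by
  simp [List.replicate_succ]

lemma rep_merge (a b : ℕ) (x : G) (t : List G) :
    List.replicate a x ++ (List.replicate b x ++ t) = List.replicate (a+b) x ++ t := by
  rw [← List.append_assoc, ← List.replicate_add]

/-! ### Specialized development: `n = m + 3` -/

section Spec

variable (m : ℕ) (μ : List G → G) (e ebar : G)

/-- `k` copies of the block `e^m ē`. -/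
def Tk (k : ℕ) : List G := (List.replicate k (List.replicate m e ++ [ebar])).flatten

lemma Tk_zero : Tk m e ebar 0 = [] := rfl

lemma Tk_succ (k : ℕ) :
    Tk m e ebar (k+1) = Tk m e ebar k ++ (List.replicate m e ++ [ebar]) := by
  unfold Tk
  rw [List.replicate_succ', List.flatten_append]
  simp

lemma Tk_length (k : ℕ) : (Tk m e ebar k).length = k * (m + 1) := by
  induction k with
  | zero => simp [Tk_zero]
  | succ k ih => rw [Tk_succ]; simp [ih]; ring

variable (hassoc : TotAssoc (m+3) μ) (hsolv : UniqSolv (m+3) μ)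
  (hebar : μ (List.replicate (m+2) e ++ [ebar]) = e)

include hsolv in
lemma cancel {i : ℕ} (hi : i ≤ m+2) {u : List G} (hu : u.length = m+2) {a b : G}
    (hab : μ (u.take i ++ a :: u.drop i) = μ (u.take i ++ b :: u.drop i)) : a = b := by
  obtain ⟨h, -, huniq⟩ := hsolv u (μ (u.take i ++ b :: u.drop i))
    (by omega) i (by omega)
  exact (huniq a hab).trans (huniq b rfl).symm

include hassoc hsolv hebar in
lemma lemD : ∀ i ≤ m+2, μ (List.replicate i e ++ ebar :: List.replicate (m+2-i) e) = e := by
  intro i hi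
  obtain ⟨a, ha⟩ : ∃ a, m + 2 = a + i := ⟨m+2-i, by omega⟩
  have ha' : m + 2 - i = a := by omega
  rw [ha']
  rw [ha] at hebar
  have key := hassoc [] (List.replicate (a+i) e ++ [ebar]) (List.replicate (a+i) e)
    (List.replicate a e) (List.replicate i e ++ ebar :: List.replicate a e)
    (List.replicate i e)
    (by simp <;> omega) (by simp <;> omega) (by simp <;> omega) (by simp <;> omega)
    (by simp only [List.nil_append, List.append_assoc, List.cons_append,
      List.replicate_add, List.singleton_append])
  rw [hebar] at key
  have hL : ([] : List G) ++ e :: List.replicate (a+i) e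
      = List.replicate a e ++ e :: List.replicate i e := by
    rw [List.nil_append, ← List.replicate_succ, ← List.replicate_succ, ← List.replicate_add]
    congr 1
  rw [hL] at key
  apply cancel m μ hsolv (i := a) (show a ≤ m+2 by omega)
    (u := List.replicate (a+i) e) (by simp <;> omega)
  rw [List.take_replicate, List.drop_replicate, show min a (a+i) = a by omega,
    show a+i-a = i by omega]
  exact key.symm

include hassoc hsolv hebar in
lemma lemM : ∀ j ≤ m+1, ∀ x : G,
    μ (x :: (List.replicate j e ++ ebar :: List.replicate (m+1-j) e)) = x := by
  intro j hj x
  obtain ⟨y, hy, -⟩ := hsolv (ebar :: List.replicate (m+1) e) x (by simp <;> omega) 0 (by omega)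
  simp only [List.take_zero, List.drop_zero, List.nil_append] at hy
  have key := hassoc [] (y :: ebar :: List.replicate (m+1) e)
    (List.replicate j e ++ ebar :: List.replicate (m+1-j) e)
    (y :: ebar :: List.replicate m e)
    (List.replicate (j+1) e ++ ebar :: List.replicate (m+1-j) e) []
    (by simp <;> omega) (by simp <;> omega) (by simp <;> omega) (by simp <;> omega)
    (by
      simp only [List.nil_append, List.append_nil, List.cons_append, List.append_assoc]
      congr 1; congr 1
      rw [← List.append_assoc, ← List.replicate_add, ← List.append_assoc,
        ← List.replicate_add, show m + 1 + j = m + (j+1) by omega])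
  have hD := lemD m μ e ebar hassoc hsolv hebar (j+1) (by omega)
  rw [show m+2-(j+1) = m+1-j by omega] at hD
  rw [hD, hy, List.nil_append] at key
  rw [key]
  have h2 : (y :: ebar :: List.replicate m e) ++ [e]
      = y :: ebar :: List.replicate (m+1) e := by
    simp [List.replicate_succ']
  rw [h2, hy]


include hassoc in
lemma mu_expand (p c s : List G) (hc : c.length = m+3) (hps : p.length + s.length = m+2) :
    μ (p ++ μ c :: s) = muStar (m+3) μ e (p ++ c ++ s) := by
  rw [← muStar_of_length (m+3) μ e (by omega)
    (show (p ++ μ c :: s).length = m+3 by simp <;> omega)]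
  exact genAssoc (m+3) μ e (by omega) hassoc (p.length + s.length) p c s rfl hc
    ⟨1, by omega⟩

include hassoc hsolv hebar in
lemma lemS : ∀ (k : ℕ) (x : G),
    muStar (m+3) μ e (x :: (Tk m e ebar k ++ List.replicate k e)) = x := by
  intro k
  induction k with
  | zero => intro x; simpa [Tk_zero] using muStar_single (m+3) μ e x
  | succ k ih =>
    intro x
    rcases Nat.eq_zero_or_pos k with rfl | hk
    · rw [muStar_of_length (m+3) μ e (by omega)
        (by simp [Tk_succ, Tk_zero] <;> omega)]
      have hM := lemM m μ e ebar hassoc hsolv hebar m (by omega) x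
      rw [show m+1-m = 1 by omega] at hM
      simpa [Tk_succ, Tk_zero] using hM
    · obtain ⟨k', rfl⟩ : ∃ k', k = k' + 1 := ⟨k-1, by omega⟩
      have hD := lemD m μ e ebar hassoc hsolv hebar m (by omega)
      rw [show m+2-m = 2 by omega] at hD
      have hgen := genAssoc (m+3) μ e (by omega) hassoc
        ((x :: Tk m e ebar (k'+1)).length + (List.replicate k' e).length)
        (x :: Tk m e ebar (k'+1)) (List.replicate m e ++ ebar :: List.replicate 2 e)
        (List.replicate k' e) rfl (by simp <;> omega)
        (by
          simp only [List.length_cons, List.length_replicate, Tk_length]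
          rw [show m+3-1 = m+2 by omega]
          exact ⟨k'+1, by ring⟩)
      rw [hD] at hgen
      have e1 : (x :: Tk m e ebar (k'+1)) ++ e :: List.replicate k' e
          = x :: (Tk m e ebar (k'+1) ++ List.replicate (k'+1) e) := by
        simp [List.replicate_succ]
      have e2 : (x :: Tk m e ebar (k'+1)) ++ (List.replicate m e ++ ebar :: List.replicate 2 e)
            ++ List.replicate k' e
          = x :: (Tk m e ebar (k'+1+1) ++ List.replicate (k'+1+1) e) := by
        rw [Tk_succ m e ebar (k'+1)]
        simp [List.replicate_succ, List.append_assoc]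
      rw [e1, e2] at hgen
      rw [← hgen, ih]

include hassoc in
lemma hgdelete (p s : List G) (x : G) (k : ℕ)
    (hS : muStar (m+3) μ e (x :: (Tk m e ebar k ++ List.replicate k e)) = x)
    (hps : (m+2) ∣ (p.length + s.length)) :
    muStar (m+3) μ e (p ++ (x :: (Tk m e ebar k ++ List.replicate k e)) ++ s)
      = muStar (m+3) μ e (p ++ x :: s) := by
  have hlen : (x :: (Tk m e ebar k ++ List.replicate k e)).length = k*(m+2)+1 := by
    simp [Tk_length]; ring
  have hg := genAssocStar (m+3) μ e (by omega) hassoc (k*(m+2)+1) p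
    (x :: (Tk m e ebar k ++ List.replicate k e)) s hlen (by omega)
    (by
      rw [Nat.add_sub_cancel, show m+3-1 = m+2 by omega]
      exact ⟨k, by ring⟩)
    (by rw [show m+3-1 = m+2 by omega]; exact hps)
  rw [hS] at hg
  exact hg.symm

include hassoc in
lemma iterForm (φ : G → G)
    (hφ : ∀ g : G, φ g = μ (e :: g :: (List.replicate m e ++ [ebar]))) :
    ∀ (k : ℕ) (g : G),
      φ^[k] g = muStar (m+3) μ e (List.replicate k e ++ g :: Tk m e ebar k) := by
  intro k
  induction k with
  | zero => intro g; simp [Tk_zero, muStar_single]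
  | succ k ih =>
    intro g
    rw [Function.iterate_succ_apply', hφ, ih g]
    set W := List.replicate k e ++ g :: Tk m e ebar k with hWdef
    have hW : W.length = k*(m+2)+1 := by simp [hWdef, Tk_length]; ring
    rw [← muStar_of_length (m+3) μ e (by omega)
      (show (e :: muStar (m+3) μ e W :: (List.replicate m e ++ [ebar])).length = m+3 by
        simp <;> omega)]
    have hg := genAssocStar (m+3) μ e (by omega) hassoc (k*(m+2)+1) [e]
      W (List.replicate m e ++ [ebar]) hW (by omega)
      (by
        rw [Nat.add_sub_cancel, show m+3-1 = m+2 by omega]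
        exact ⟨k, by ring⟩)
      (by simp; exact ⟨1, by omega⟩)
    have hsh : (e :: muStar (m+3) μ e W :: (List.replicate m e ++ [ebar]))
        = [e] ++ muStar (m+3) μ e W :: (List.replicate m e ++ [ebar]) := rfl
    rw [hsh, hg, hWdef]
    congr 1
    rw [Tk_succ]
    simp [List.replicate_succ, List.append_assoc]


include hassoc hsolv hebar in
lemma key_st_e1 (q : List G) (y : G) (hq : q.length = m+2) :
    μ (muStar (m+3) μ e ((q ++ [y]) ++ Tk m e ebar (m+2))
        :: (List.replicate m e ++ [ebar, μ (List.replicate (m+3) e)]))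
      = μ (q ++ [y]) := by
  set W := (q ++ [y]) ++ Tk m e ebar (m+2) with hW
  have hWl : W.length = (m+2)*(m+2)+1 := by
    simp [hW, Tk_length, hq]; ring
  have hA := mu_expand m μ e hassoc
    (muStar (m+3) μ e W :: (List.replicate m e ++ [ebar]))
    (List.replicate (m+3) e) [] (by simp <;> omega) (by simp <;> omega)
  rw [show (muStar (m+3) μ e W :: (List.replicate m e ++ [ebar, μ (List.replicate (m+3) e)]))
      = (muStar (m+3) μ e W :: (List.replicate m e ++ [ebar]))
        ++ μ (List.replicate (m+3) e) :: [] by simp, hA]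
  have hB := genAssocStar (m+3) μ e (by omega) hassoc ((m+2)*(m+2)+1) [] W
    ((List.replicate m e ++ [ebar]) ++ List.replicate (m+3) e ++ []) hWl (by omega)
    (by
      rw [Nat.add_sub_cancel, show m+3-1 = m+2 by omega]
      exact ⟨m+2, by ring⟩)
    (by rw [show m+3-1 = m+2 by omega]; simp; exact ⟨2, by omega⟩)
  rw [show ((muStar (m+3) μ e W :: (List.replicate m e ++ [ebar]))
        ++ List.replicate (m+3) e ++ ([]:List G))
      = [] ++ muStar (m+3) μ e W
        :: ((List.replicate m e ++ [ebar]) ++ List.replicate (m+3) e ++ []) by simp, hB]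
  have hdel := hgdelete m μ e ebar hassoc q [] y (m+3)
    (lemS m μ e ebar hassoc hsolv hebar (m+3) y) (by rw [hq]; simp)
  rw [show ([] ++ W ++ ((List.replicate m e ++ [ebar]) ++ List.replicate (m+3) e ++ []))
      = q ++ (y :: (Tk m e ebar (m+3) ++ List.replicate (m+3) e)) ++ [] by
        rw [hW, Tk_succ m e ebar (m+2)]; simp, hdel]
  exact muStar_of_length (m+3) μ e (by omega) (by simp [hq])

end Spec

end HGaux

open HGaux in
theorem statement5 {G : Type*} (n : ℕ) (hn : 3 ≤ n)
    (μ : List G → G) (hassoc : TotAssoc n μ) (hsolv : UniqSolv n μ)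
    (e ebar : G) (hebar : μ (List.replicate (n - 1) e ++ [ebar]) = e)
    (st : G → G → G)
    (hst : ∀ g h : G, st g h = μ (g :: (List.replicate (n - 3) e ++ [ebar, h])))
    (φ : G → G)
    (hφ : ∀ g : G, φ g = μ (e :: g :: (List.replicate (n - 3) e ++ [ebar])))
    (e1 : G) (he1 : e1 = μ (List.replicate n e)) :
    Function.Bijective φ ∧
    (∀ g h : G, φ (st g h) = st (φ g) (φ h)) ∧
    φ e1 = e1 ∧
    (∀ (g w : G), st e1 w = e → st w e1 = e → φ^[n - 1] g = st (st e1 g) w) ∧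
    (∀ (g₀ : G) (rest : List G), rest.length = n - 1 →
      μ (g₀ :: rest) =
        st (List.foldl st g₀ (rest.mapIdx fun i x => φ^[i + 1] x)) e1) := by
  obtain ⟨m, rfl⟩ : ∃ m, n = m + 3 := ⟨n - 3, by omega⟩
  clear hn
  have h1 : m + 3 - 1 = m + 2 := by omega
  have h3 : m + 3 - 3 = m := by omega
  rw [h1] at hebar
  rw [h1]
  simp only [h3] at hst hφ
  -- φ is the solution map at place 1
  have hu1 : (e :: (List.replicate m e ++ [ebar])).length = m + 3 - 1 := by
    simp <;> omega
  have hform : ∀ a : G,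
      μ ((e :: (List.replicate m e ++ [ebar])).take 1
        ++ a :: (e :: (List.replicate m e ++ [ebar])).drop 1) = φ a := by
    intro a; rw [hφ a]; simp
  have hbij : Function.Bijective φ := by
    constructor
    · intro a b hab
      obtain ⟨h, -, huniq⟩ := hsolv (e :: (List.replicate m e ++ [ebar])) (φ b)
        hu1 1 (by omega)
      exact (huniq a ((hform a).trans hab)).trans (huniq b (hform b)).symm
    · intro g
      obtain ⟨h, hh, -⟩ := hsolv (e :: (List.replicate m e ++ [ebar])) g hu1 1 (by omega)
      exact ⟨h, (hform h).symm.trans hh⟩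
  -- associativity of st
  have st_assoc : ∀ a b c : G, st (st a b) c = st a (st b c) := by
    intro a b c
    rw [hst, hst a b, hst b c, hst a]
    have key := hassoc [] (a :: (List.replicate m e ++ [ebar, b]))
      (List.replicate m e ++ [ebar, c])
      (a :: (List.replicate m e ++ [ebar])) (b :: (List.replicate m e ++ [ebar, c])) []
      (by simp <;> omega) (by simp <;> omega) (by simp <;> omega) (by simp <;> omega)
      (by simp)
    simpa using key
  -- right identity
  have st_er : ∀ a : G, st a e = a := by
    intro a
    rw [hst]
    have hM := HGaux.lemM m μ e ebar hassoc hsolv hebar m (by omega) a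
    rw [show m+1-m = 1 by omega] at hM
    simpa using hM
  -- fixed point
  have hfix : φ e1 = e1 := by
    rw [hφ, he1]
    have key := hassoc [e] (List.replicate (m+3) e) (List.replicate m e ++ [ebar])
      (List.replicate (m+2) e) (List.replicate (m+2) e ++ [ebar]) []
      (by simp) (by simp <;> omega) (by simp <;> omega) (by simp <;> omega)
      (by
        simp only [List.append_assoc, List.append_nil, List.cons_append, List.nil_append,
          List.singleton_append]
        rw [HGaux.rep_cons, HGaux.rep_merge, HGaux.rep_merge]
        congr 2
        omega)
    rw [hebar] at key
    have h2 : List.replicate (m+2) e ++ e :: ([] : List G) = List.replicate (m+3) e := by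
      simp [← List.replicate_succ']
    rw [h2] at key
    simpa using key
  -- homomorphism
  have hhom : ∀ g h : G, φ (st g h) = st (φ g) (φ h) := by
    intro g h
    rw [hφ (st g h), hst g h, hst (φ g) (φ h), hφ g, hφ h]
    -- LHS
    have eL := HGaux.mu_expand m μ e hassoc [e] (g :: (List.replicate m e ++ [ebar, h]))
      (List.replicate m e ++ [ebar]) (by simp <;> omega) (by simp <;> omega)
    -- RHS step 1 : expand φ h
    have eR1 := HGaux.mu_expand m μ e hassoc
      (μ (e :: g :: (List.replicate m e ++ [ebar])) :: (List.replicate m e ++ [ebar]))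
      (e :: h :: (List.replicate m e ++ [ebar])) []
      (by simp <;> omega) (by simp <;> omega)
    -- RHS step 2 : expand φ g inside muStar
    have eR2 := HGaux.genAssoc (m+3) μ e (by omega) hassoc
      (0 + ((List.replicate m e ++ [ebar]) ++ (e :: h :: (List.replicate m e ++ [ebar])) ++ ([]:List G)).length)
      [] (e :: g :: (List.replicate m e ++ [ebar]))
      ((List.replicate m e ++ [ebar]) ++ (e :: h :: (List.replicate m e ++ [ebar])) ++ [])
      rfl (by simp <;> omega) (by rw [h1]; exact ⟨2, by simp; omega⟩)
    -- contraction via lemM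
    have hM := HGaux.lemM m μ e ebar hassoc hsolv hebar m (by omega) ebar
    rw [show m+1-m = 1 by omega] at hM
    have eC := HGaux.genAssoc (m+3) μ e (by omega) hassoc
      ((e :: g :: List.replicate m e).length + (h :: (List.replicate m e ++ [ebar])).length)
      (e :: g :: List.replicate m e)
      (ebar :: (List.replicate m e ++ ebar :: List.replicate 1 e))
      (h :: (List.replicate m e ++ [ebar]))
      rfl (by simp <;> omega) (by rw [h1]; exact ⟨2, by simp; omega⟩)
    rw [hM] at eC
    rw [show (e :: μ (g :: (List.replicate m e ++ [ebar, h])) :: (List.replicate m e ++ [ebar]))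
        = [e] ++ μ (g :: (List.replicate m e ++ [ebar, h])) :: (List.replicate m e ++ [ebar])
        from rfl, eL]
    rw [show (μ (e :: g :: (List.replicate m e ++ [ebar]))
          :: (List.replicate m e ++ [ebar, μ (e :: h :: (List.replicate m e ++ [ebar]))]))
        = (μ (e :: g :: (List.replicate m e ++ [ebar])) :: (List.replicate m e ++ [ebar]))
          ++ μ (e :: h :: (List.replicate m e ++ [ebar])) :: [] by simp, eR1]
    rw [show ((μ (e :: g :: (List.replicate m e ++ [ebar])) :: (List.replicate m e ++ [ebar]))
          ++ (e :: h :: (List.replicate m e ++ [ebar])) ++ ([]:List G))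
        = [] ++ μ (e :: g :: (List.replicate m e ++ [ebar]))
          :: ((List.replicate m e ++ [ebar]) ++ (e :: h :: (List.replicate m e ++ [ebar])) ++ [])
        by simp, eR2]
    refine Eq.trans (Eq.trans ?_ eC) ?_
    · congr 1
      simp
    · congr 1
      simp
  refine ⟨hbij, hhom, hfix, ?_, ?_⟩
  · -- conjugation
    intro g w hw1 hw2
    have hiter := HGaux.iterForm m μ e ebar hassoc φ hφ (m+2) g
    have lemK : st (φ^[m+2] g) e1 = st e1 g := by
      have hLHS : st (φ^[m+2] g) e1 = μ (List.replicate (m+2) e ++ [g]) := by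
        rw [hst, hiter, he1]
        have hk := HGaux.key_st_e1 m μ e ebar hassoc hsolv hebar
          (List.replicate (m+2) e) g (by simp)
        rw [show ((List.replicate (m+2) e ++ [g]) ++ Tk m e ebar (m+2))
            = List.replicate (m+2) e ++ g :: Tk m e ebar (m+2) by simp] at hk
        exact hk
      have hRHS : st e1 g = μ (List.replicate (m+2) e ++ [g]) := by
        rw [hst, he1]
        have h0 := HGaux.mu_expand m μ e hassoc [] (List.replicate (m+3) e)
          (List.replicate m e ++ [ebar, g]) (by simp) (by simp <;> omega)
        rw [show (μ (List.replicate (m+3) e) :: (List.replicate m e ++ [ebar, g]))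
            = [] ++ μ (List.replicate (m+3) e) :: (List.replicate m e ++ [ebar, g])
            from rfl, h0]
        have h2 := HGaux.genAssoc (m+3) μ e (by omega) hassoc
          ((List.replicate (m+1) e).length + ([g]:List G).length)
          (List.replicate (m+1) e) (List.replicate (m+2) e ++ [ebar]) [g]
          rfl (by simp <;> omega) (by rw [h1]; exact ⟨1, by simp⟩)
        rw [hebar] at h2
        rw [show (([]:List G) ++ List.replicate (m+3) e ++ (List.replicate m e ++ [ebar, g]))
            = List.replicate (m+1) e ++ (List.replicate (m+2) e ++ [ebar]) ++ [g] by
              simp only [List.nil_append, List.append_assoc, List.cons_append,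
                List.singleton_append]
              rw [HGaux.rep_merge, HGaux.rep_merge]
              congr 2
              omega]
        rw [← h2]
        rw [show (List.replicate (m+1) e ++ e :: [g])
            = List.replicate (m+2) e ++ [g] by
              rw [show (e :: [g] : List G) = List.replicate 1 e ++ [g] from rfl,
                HGaux.rep_merge]]
        exact muStar_of_length (m+3) μ e (by omega) (by simp <;> omega)
      rw [hLHS, hRHS]
    calc φ^[m+2] g = st (φ^[m+2] g) e := (st_er _).symm
      _ = st (φ^[m+2] g) (st e1 w) := by rw [hw1]
      _ = st (st (φ^[m+2] g) e1) w := (st_assoc _ _ _).symm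
      _ = st (st e1 g) w := by rw [lemK]
  · -- chain formula
    intro g₀ rest hr
    have chain : ∀ (gs : List G) (g0 : G),
        List.foldl st g0 (gs.mapIdx fun i x => φ^[i+1] x)
          = muStar (m+3) μ e ((g0 :: gs) ++ Tk m e ebar gs.length) := by
      intro gs
      induction gs using List.reverseRecOn with
      | nil => intro g0; simp [HGaux.Tk_zero, muStar_single]
      | append_singleton l x ih =>
        intro g0
        rw [List.mapIdx_append_one, List.foldl_append, List.foldl_cons, List.foldl_nil,
          ih g0, hst]
        rw [HGaux.iterForm m μ e ebar hassoc φ hφ (l.length+1) x]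
        set k := l.length with hk
        set Wl := (g0 :: l) ++ Tk m e ebar k with hWl
        set WX := List.replicate (k+1) e ++ x :: Tk m e ebar (k+1) with hWX
        have hWll : Wl.length = k*(m+2)+1 := by
          simp [hWl, HGaux.Tk_length]; ring
        have hWXl : WX.length = (k+1)*(m+2)+1 := by
          simp [hWX, HGaux.Tk_length]; ring
        rw [← muStar_of_length (m+3) μ e (by omega)
          (show (muStar (m+3) μ e Wl
            :: (List.replicate m e ++ [ebar, muStar (m+3) μ e WX])).length = m+3 by
            simp <;> omega)]
        have hA := HGaux.genAssocStar (m+3) μ e (by omega) hassoc (k*(m+2)+1) [] Wl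
          (List.replicate m e ++ [ebar, muStar (m+3) μ e WX]) hWll (by omega)
          (by
            rw [Nat.add_sub_cancel, show m+3-1 = m+2 by omega]
            exact ⟨k, by ring⟩)
          (by rw [show m+3-1 = m+2 by omega]; simp)
        rw [show (muStar (m+3) μ e Wl
              :: (List.replicate m e ++ [ebar, muStar (m+3) μ e WX]))
            = [] ++ muStar (m+3) μ e Wl
              :: (List.replicate m e ++ [ebar, muStar (m+3) μ e WX]) from rfl, hA]
        have hB := HGaux.genAssocStar (m+3) μ e (by omega) hassoc ((k+1)*(m+2)+1)
          (Wl ++ (List.replicate m e ++ [ebar])) WX [] hWXl (by omega)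
          (by
            rw [Nat.add_sub_cancel, show m+3-1 = m+2 by omega]
            exact ⟨k+1, by ring⟩)
          (by
            rw [show m+3-1 = m+2 by omega]
            simp only [List.length_append, List.length_cons, List.length_replicate, hWll,
              List.length_nil]
            exact ⟨k+1, by ring⟩)
        rw [show ([] ++ Wl ++ (List.replicate m e ++ [ebar, muStar (m+3) μ e WX]))
            = (Wl ++ (List.replicate m e ++ [ebar])) ++ muStar (m+3) μ e WX :: [] by simp,
          hB]
        rcases (g0 :: l).eq_nil_or_concat' with habs | ⟨q, y, hqy⟩
        · simp at habs
        have hq : q.length = k := by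
          have := congrArg List.length hqy
          simp [hk] at this ⊢
          omega
        have hdel := HGaux.hgdelete m μ e ebar hassoc q (x :: Tk m e ebar (k+1)) y (k+1)
          (HGaux.lemS m μ e ebar hassoc hsolv hebar (k+1) y)
          (by
            simp only [List.length_cons, List.length_append, List.length_replicate,
              HGaux.Tk_length, hq]
            exact ⟨k+1, by ring⟩)
        rw [show ((Wl ++ (List.replicate m e ++ [ebar])) ++ WX ++ ([]:List G))
            = q ++ (y :: (Tk m e ebar (k+1) ++ List.replicate (k+1) e))
              ++ (x :: Tk m e ebar (k+1)) by
              rw [hWl, hWX, hqy, HGaux.Tk_succ m e ebar k]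
              simp, hdel]
        congr 1
        rw [show q ++ y :: (x :: Tk m e ebar (k+1))
            = (q ++ [y]) ++ x :: Tk m e ebar (k+1) by simp, ← hqy]
        simp
        rfl
    rw [chain rest g₀, hr, hst, he1]
    rcases (g₀ :: rest).eq_nil_or_concat' with habs | ⟨q, y, hqy⟩
    · simp at habs
    have hq : q.length = m+2 := by
      have := congrArg List.length hqy
      simp [hr] at this ⊢
      omega
    have hk := HGaux.key_st_e1 m μ e ebar hassoc hsolv hebar q y hq
    rw [hqy, hk, ← hqy]
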